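/- (Kronecker's theorem) The Hankel operator Γ_f : ℓ²(ℕ,ℂ) → ℓ²(ℕ,ℂ), (Γ_f v)(k) = Σ_{j=0}^∞ f(k+j)·v(j), has rank exactly N; that is, its range is an N-dimensional subspace of ℓ²(ℕ,ℂ). -/

import Mathlib

/-- Kronecker's theorem: the Hankel operator `Γ_f` on `ℓ²(ℕ,ℂ)`
generated by `f(k) = Σ_{j=1}^N a_j z_j^k` has rank exactly `N`. -/
theorem stmt_2 (N : ℕ) (hN : 1 ≤ N) (a z : Fin N → ℂ)
    (ha : ∀ j, a j ≠ 0) (hzinj : Function.Injective z)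
    (hz : ∀ j, 0 < ‖z j‖ ∧ ‖z j‖ < 1)
    (f : ℕ → ℂ) (hf : ∀ k, f k = ∑ j, a j * z j ^ k)
    (Γ : lp (fun _ : ℕ => ℂ) 2 →L[ℂ] lp (fun _ : ℕ => ℂ) 2)
    (hΓ : ∀ v : lp (fun _ : ℕ => ℂ) 2, ∀ k : ℕ, (Γ v : ∀ _ : ℕ, ℂ) k = ∑' j, f (k + j) * v j) :
    Module.rank ℂ
      (LinearMap.range (Γ : lp (fun _ : ℕ => ℂ) 2 →ₗ[ℂ] lp (fun _ : ℕ => ℂ) 2)) = N := by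
  classical
  have htr : ((2 : ENNReal)).toReal = ((2 : ℕ) : ℝ) := by norm_num
  -- the geometric model vectors
  have hmem : ∀ j : Fin N, Memℓp (fun k : ℕ => z j ^ k) 2 := by
    intro j
    apply memℓp_gen
    have h1 : ‖z j‖ ^ 2 < 1 := by nlinarith [(hz j).1, (hz j).2]
    have hs : Summable (fun k : ℕ => (‖z j‖ ^ 2) ^ k) :=
      summable_geometric_of_lt_one (by positivity) h1
    refine hs.congr fun k => ?_
    rw [htr, Real.rpow_natCast]
    rw [norm_pow]
    ring
  set E : Fin N → lp (fun _ : ℕ => ℂ) 2 := fun j => ⟨fun k => z j ^ k, hmem j⟩ with hE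
  have hEcoe : ∀ j (k : ℕ), (E j : ∀ _ : ℕ, ℂ) k = z j ^ k := fun _ _ => rfl
  -- summability of the pairing
  have hsum : ∀ (j : Fin N) (v : lp (fun _ : ℕ => ℂ) 2),
      Summable (fun i : ℕ => z j ^ i * v i) := by
    intro j v
    refine Summable.of_norm_bounded (g := fun i => ‖z j‖ ^ i * ‖v‖) ?_ ?_
    · exact (summable_geometric_of_lt_one (hz j).1.le (hz j).2).mul_right _
    · intro i
      rw [norm_mul, norm_pow]
      exact mul_le_mul_of_nonneg_left (lp.norm_apply_le_norm two_ne_zero v i)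
        (by positivity)
  -- the key formula
  have key : ∀ v : lp (fun _ : ℕ => ℂ) 2,
      Γ v = ∑ j, (a j * ∑' i, z j ^ i * v i) • E j := by
    intro v
    apply lp.ext
    funext k
    have hL : (Γ v : ∀ _ : ℕ, ℂ) k
        = ∑ j, (a j * ∑' i, z j ^ i * v i) * z j ^ k := by
      rw [hΓ v k]
      have h1 : (fun i : ℕ => f (k + i) * v i)
          = fun i : ℕ => ∑ j, (a j * z j ^ k) * (z j ^ i * v i) := by
        funext i
        rw [hf, Finset.sum_mul]
        refine Finset.sum_congr rfl fun j _ => ?_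
        rw [pow_add]; ring
      rw [h1, Summable.tsum_finsetSum (fun j _ => (hsum j v).mul_left _)]
      refine Finset.sum_congr rfl fun j _ => ?_
      rw [tsum_mul_left]; ring
    rw [hL, lp.coeFn_sum, Finset.sum_apply]
    refine Finset.sum_congr rfl fun j _ => ?_
    rw [lp.coeFn_smul, Pi.smul_apply, hEcoe, smul_eq_mul]
  -- the Vandermonde matrix is invertible
  have hM : IsUnit (Matrix.vandermonde z) := by
    rw [Matrix.isUnit_iff_isUnit_det, isUnit_iff_ne_zero]
    exact Matrix.det_vandermonde_ne_zero_iff.2 hzinj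
  -- range = span of the E j
  have hrange : LinearMap.range (Γ : lp (fun _ : ℕ => ℂ) 2 →ₗ[ℂ] lp (fun _ : ℕ => ℂ) 2)
      = Submodule.span ℂ (Set.range E) := by
    apply le_antisymm
    · rintro x ⟨v, rfl⟩
      have : (Γ : lp (fun _ : ℕ => ℂ) 2 →ₗ[ℂ] lp (fun _ : ℕ => ℂ) 2) v = Γ v := rfl
      rw [this, key v]
      exact Submodule.sum_mem _ fun j _ =>
        Submodule.smul_mem _ _ (Submodule.subset_span ⟨j, rfl⟩)
    · rw [Submodule.span_le]
      rintro x ⟨j0, rfl⟩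
      obtain ⟨c, hc⟩ := (Matrix.mulVec_surjective_iff_isUnit.2 hM)
        (fun j' => (a j')⁻¹ * (if j' = j0 then 1 else 0))
      set w : ℕ → ℂ := fun n => if h : n < N then c ⟨n, h⟩ else 0 with hw
      have hwmem : Memℓp w 2 := by
        apply memℓp_gen
        apply summable_of_ne_finset_zero (s := Finset.range N)
        intro n hn
        have : w n = 0 := by
          rw [hw]; simp only [Finset.mem_range] at hn
          simp only [dif_neg hn]
        rw [this]
        simp [htr]
      set v : lp (fun _ : ℕ => ℂ) 2 := ⟨w, hwmem⟩ with hv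
      have hvc : ∀ n : ℕ, (v : ∀ _ : ℕ, ℂ) n = w n := fun _ => rfl
      have hpair : ∀ j : Fin N, (∑' i, z j ^ i * v i)
          = (Matrix.vandermonde z).mulVec c j := by
        intro j
        have h0 : ∀ n ∉ Finset.range N, z j ^ n * v n = 0 := by
          intro n hn
          rw [hvc, hw]
          simp only [Finset.mem_range] at hn
          simp only [dif_neg hn, mul_zero]
        rw [tsum_eq_sum h0, Matrix.mulVec, dotProduct]
        rw [← Fin.sum_univ_eq_sum_range (fun n => z j ^ n * v n)]
        refine Finset.sum_congr rfl fun i _ => ?_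
        rw [hvc, hw, Matrix.vandermonde_apply]
        simp [i.isLt]
      have : Γ v = E j0 := by
        rw [key v]
        have : ∀ j : Fin N, (a j * ∑' i, z j ^ i * v i) = if j = j0 then 1 else 0 := by
          intro j
          rw [hpair, hc]
          rw [← mul_assoc, mul_inv_cancel₀ (ha j), one_mul]
        simp only [this]
        simp [ite_smul]
      exact ⟨v, this⟩
  -- coordinate projection onto the first N coordinates
  let π : lp (fun _ : ℕ => ℂ) 2 →ₗ[ℂ] (Fin N → ℂ) :=
    { toFun := fun v => fun k => (v : ∀ _ : ℕ, ℂ) (k : ℕ)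
      map_add' := by intro x y; funext k; simp [lp.coeFn_add]
      map_smul' := by intro c x; funext k; simp [lp.coeFn_smul] }
  have hEind : LinearIndependent ℂ E := by
    have h1 : LinearIndependent ℂ (fun j => Matrix.vandermonde z j) :=
      Matrix.linearIndependent_rows_iff_isUnit.2 hM
    have h2 : π ∘ E = fun j => Matrix.vandermonde z j := by
      funext j; funext k
      show (E j : ∀ _ : ℕ, ℂ) (k : ℕ) = Matrix.vandermonde z j k
      rw [hEcoe, Matrix.vandermonde_apply]
    exact LinearIndependent.of_comp π (by rw [h2]; exact h1)
  rw [hrange, rank_span hEind, Cardinal.mk_range_eq E hEind.injective,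
    Cardinal.mk_fin]
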